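/- Let α > 0, λ < 0, and let a, c, d be real numbers with c < 0 < a, d ≥ 0, satisfying 1/α + λ² + a·c − c² = 0. With ρ₁ = (√(4c(2c−a)+d²)+d)/2 and ρ₂ = (√(4c(2c−a)+d²)−d)/2, one has λ²/(λ² + 1/α) + 1/(α(c−a)(2c−a)) + 1/(α·ρ₁(ρ₁+ρ₂)) + 1/(α·ρ₂(ρ₁+ρ₂)) = 1. -/

import Mathlib

/-- the squared moduli of the four components sum to 1. -/
theorem stmt_1 (α lam a c d : ℝ) (hα : 0 < α) (hlam : lam < 0)
    (hc : c < 0) (ha : 0 < a) (hd : 0 ≤ d)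
    (hrel : 1/α + lam^2 + a*c - c^2 = 0)
    (ρ₁ ρ₂ : ℝ)
    (hρ₁ : ρ₁ = (Real.sqrt (4*c*(2*c - a) + d^2) + d)/2)
    (hρ₂ : ρ₂ = (Real.sqrt (4*c*(2*c - a) + d^2) - d)/2) :
    lam^2/(lam^2 + 1/α) + 1/(α*(c - a)*(2*c - a))
      + 1/(α*ρ₁*(ρ₁ + ρ₂)) + 1/(α*ρ₂*(ρ₁ + ρ₂)) = 1 := by
  set s := Real.sqrt (4*c*(2*c - a) + d^2) with hs
  have hpos : 0 < 4*c*(2*c - a) := by nlinarith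
  have hx : 0 ≤ 4*c*(2*c - a) + d^2 := by nlinarith
  have hs2 : s^2 = 4*c*(2*c - a) + d^2 := Real.sq_sqrt hx
  have hsnn : 0 ≤ s := Real.sqrt_nonneg _
  have hsd : d < s := by nlinarith
  have hρ₁pos : 0 < ρ₁ := by rw [hρ₁]; linarith
  have hρ₂pos : 0 < ρ₂ := by rw [hρ₂]; linarith
  have hsum : ρ₁ + ρ₂ = s := by rw [hρ₁, hρ₂]; ring
  have hprod : ρ₁ * ρ₂ = c*(2*c - a) := by
    rw [hρ₁, hρ₂]; nlinarith [hs2]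
  have hαne : α ≠ 0 := ne_of_gt hα
  have hca : c - a < 0 := by linarith
  have h2ca : 2*c - a < 0 := by linarith
  have hden : lam^2 + 1/α = c*(c - a) := by linarith
  have hdenne : lam^2 + 1/α ≠ 0 := by
    rw [hden]; nlinarith
  have h1 : 1 = (c*(c-a) - lam^2)*α := by
    field_simp at hrel
    linarith
  have hcane : c - a ≠ 0 := ne_of_lt hca
  have h2cane : 2*c - a ≠ 0 := ne_of_lt h2ca
  have hcne : c ≠ 0 := ne_of_lt hc
  have hρ₁ne : ρ₁ ≠ 0 := ne_of_gt hρ₁pos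
  have hρ₂ne : ρ₂ ≠ 0 := ne_of_gt hρ₂pos
  have hsne : s ≠ 0 := by intro h; rw [h] at hsd; linarith
  rw [hsum, hden]
  have key : 1/(α*ρ₁*s) + 1/(α*ρ₂*s) = 1/(α*(c*(2*c-a))) := by
    rw [← hprod]
    field_simp
    linear_combination hsum
  have hune : c*(c-a) - lam^2 ≠ 0 := by nlinarith
  have hαeq : α = (c*(c-a) - lam^2)⁻¹ := by
    field_simp
    linear_combination -h1
  have final : lam^2/(c*(c-a)) + 1/(α*(c-a)*(2*c-a)) + 1/(α*(c*(2*c-a))) = 1 := by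
    rw [hαeq]
    field_simp
    have h2' : c * 2 - a ≠ 0 := by intro h; apply h2cane; linarith
    field_simp
    ring
  linarith [key, final]
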